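/- Descent step lemma: fix α ≥ 1, an α-congestion-approximator R for (B, C), and a demand b in the column space of B. Define the potential φ(f) = lmax(C⁻¹ f) + lmax(2α·R(b − B f)) and its gradient g(f) = C⁻¹ ∇lmax(C⁻¹ f) − 2α·Bᵀ Rᵀ ∇lmax(2α·R(b − B f)). Let δ = ‖C g(f)‖₁ and define h ∈ ℝ^E by h_e = −(δ/(1 + 4α²))·sgn(g(f)_e)·c_e (with sgn(0) = 0). Then φ(f + h) ≤ φ(f) − δ²/(2 + 8α²). -/

import Mathlib

open Matrix

/-- `linf x` is the maximum absolute entry of the vector `x`, i.e. `‖x‖_∞`. -/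
noncomputable def linf {ι : Type*} [Fintype ι] (x : ι → ℝ) : ℝ := ⨆ i, |x i|

/-- `l1 x` is the sum of absolute entries of the vector `x`, i.e. `‖x‖₁`. -/
def l1 {ι : Type*} [Fintype ι] (x : ι → ℝ) : ℝ := ∑ i, |x i|

/-- `opt B c b` is the minimum congestion `‖C⁻¹ f‖_∞` over flows `f` with `B f = b`,
where `C` is the diagonal matrix of capacities `c`. -/
noncomputable def opt {V E : Type*} [Fintype V] [Fintype E]
    (B : Matrix V E ℝ) (c : E → ℝ) (b : V → ℝ) : ℝ :=
  sInf {t : ℝ | ∃ f : E → ℝ, B.mulVec f = b ∧ t = linf fun e => f e / c e}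

/-- `R` is an `α`-congestion-approximator for `(B, C)`:
`‖R b‖_∞ ≤ opt(b) ≤ α · ‖R b‖_∞` for every `b` in the column space of `B`. -/
def IsCongestionApprox {V E W : Type*} [Fintype V] [Fintype E] [Fintype W]
    (B : Matrix V E ℝ) (c : E → ℝ) (α : ℝ) (R : Matrix W V ℝ) : Prop :=
  ∀ b : V → ℝ, (∃ f : E → ℝ, B.mulVec f = b) →
    linf (R.mulVec b) ≤ opt B c b ∧ opt B c b ≤ α * linf (R.mulVec b)

/-- The symmetric softmax: `lmax(x) = log (Σ_i (e^{x_i} + e^{-x_i}))`. -/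
noncomputable def lmax {ι : Type*} [Fintype ι] (x : ι → ℝ) : ℝ :=
  Real.log (∑ i, (Real.exp (x i) + Real.exp (-x i)))

/-- The gradient of the symmetric softmax. -/
noncomputable def lmaxGrad {ι : Type*} [Fintype ι] (x : ι → ℝ) : ι → ℝ :=
  fun i => (Real.exp (x i) - Real.exp (-x i)) / ∑ j, (Real.exp (x j) + Real.exp (-x j))


lemma sign_mul_self_eq_abs (x : ℝ) : Real.sign x * x = |x| := by
  rcases lt_trichotomy x 0 with h|h|h
  · rw [Real.sign_of_neg h, abs_of_neg h]; ring
  · simp [h]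
  · rw [Real.sign_of_pos h, abs_of_pos h]; ring

lemma abs_sign_le_one (x : ℝ) : |Real.sign x| ≤ 1 := by
  rcases Real.sign_apply_eq x with h|h|h <;> simp [h]

lemma taylor_quad (ψ q q' : ℝ → ℝ) (M : ℝ)
    (hψ : ∀ t, HasDerivAt ψ (q t) t) (hq : ∀ t, HasDerivAt q (q' t) t)
    (hM : ∀ t, q' t ≤ M) : ψ 1 ≤ ψ 0 + q 0 + M / 2 := by
  set χ : ℝ → ℝ := fun t => ψ 0 + q 0 * t + M / 2 * t ^ 2 - ψ t with hχdef
  set χ' : ℝ → ℝ := fun t => q 0 + M * t - q t with hχ'def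
  have hd : ∀ t, HasDerivAt χ (χ' t) t := by
    intro t
    have h1 : HasDerivAt (fun s : ℝ => ψ 0 + q 0 * s) (q 0) t := by
      simpa using ((hasDerivAt_id t).const_mul (q 0)).const_add (ψ 0)
    have h2 : HasDerivAt (fun s : ℝ => M / 2 * s ^ 2) (M * t) t := by
      have := (hasDerivAt_pow 2 t).const_mul (M / 2)
      exact this.congr_deriv (by rw [show (2:ℕ) - 1 = 1 from rfl]; push_cast; ring)
    have := (h1.add h2).sub (hψ t)
    exact this
  have hd' : ∀ t, HasDerivAt χ' (M - q' t) t := by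
    intro t
    have h1 : HasDerivAt (fun s : ℝ => q 0 + M * s) M t := by
      simpa using ((hasDerivAt_id t).const_mul M).const_add (q 0)
    exact h1.sub (hq t)
  have hmono' : Monotone χ' := by
    apply monotone_of_deriv_nonneg
    · exact fun t => (hd' t).differentiableAt
    · intro t; rw [(hd' t).deriv]; linarith [hM t]
  have hχ'0 : χ' 0 = 0 := by simp [hχ'def]
  have hmono : MonotoneOn χ (Set.Icc (0:ℝ) 1) := by
    apply monotoneOn_of_deriv_nonneg (convex_Icc 0 1)
    · exact (Continuous.continuousOn (by fun_prop) : ContinuousOn (fun t => ψ 0 + q 0 * t + M / 2 * t ^ 2) _).sub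
        (fun t _ => ((hψ t).continuousAt.continuousWithinAt))
    · exact fun t _ => ((hd t).differentiableAt).differentiableWithinAt
    · intro t ht
      rw [(hd t).deriv]
      rw [← hχ'0]
      exact hmono' (le_of_lt (Set.mem_Ioo.mp (by simpa using ht)).1)
  have := hmono (Set.mem_Icc.mpr ⟨le_refl 0, zero_le_one⟩) (Set.mem_Icc.mpr ⟨zero_le_one, le_refl 1⟩) zero_le_one
  simp only [hχdef] at this
  nlinarith [this]

lemma lmax_add_le {ι : Type*} [Fintype ι] (x u : ι → ℝ) (m : ℝ)
    (hu : ∀ i, |u i| ≤ m) :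
    lmax (x + u) ≤ lmax x + (∑ i, lmaxGrad x i * u i) + m ^ 2 / 2 := by
  rcases isEmpty_or_nonempty ι with hι | hι
  · simp [lmax]; positivity
  set Z : ℝ → ℝ := fun t => ∑ i, (Real.exp (x i + t * u i) + Real.exp (-(x i + t * u i))) with hZdef
  set Z1 : ℝ → ℝ := fun t => ∑ i, u i * (Real.exp (x i + t * u i) - Real.exp (-(x i + t * u i))) with hZ1def
  set Z2 : ℝ → ℝ := fun t => ∑ i, u i ^ 2 * (Real.exp (x i + t * u i) + Real.exp (-(x i + t * u i))) with hZ2def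
  have hZpos : ∀ t, 0 < Z t := fun t =>
    Finset.sum_pos (fun i _ => by positivity) Finset.univ_nonempty
  have hlin : ∀ (i : ι) (t : ℝ), HasDerivAt (fun s : ℝ => x i + s * u i) (u i) t := by
    intro i t
    simpa using ((hasDerivAt_id t).mul_const (u i)).const_add (x i)
  have hZd : ∀ t, HasDerivAt Z (Z1 t) t := by
    intro t
    apply HasDerivAt.fun_sum
    intro i _
    have h1 := (hlin i t).exp
    have h2 := (hlin i t).neg.exp
    exact (h1.add h2).congr_deriv (by simp only [Pi.neg_apply]; ring)
  have hZ1d : ∀ t, HasDerivAt Z1 (Z2 t) t := by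
    intro t
    apply HasDerivAt.fun_sum
    intro i _
    have h1 := (hlin i t).exp
    have h2 := (hlin i t).neg.exp
    have := (h1.sub h2).const_mul (u i)
    exact this.congr_deriv (by simp only [Pi.neg_apply]; ring)
  set ψ : ℝ → ℝ := fun t => Real.log (Z t) with hψdef
  set q : ℝ → ℝ := fun t => Z1 t / Z t with hqdef
  have hψd : ∀ t, HasDerivAt ψ (q t) t := fun t => (hZd t).log (hZpos t).ne'
  have hqd : ∀ t, HasDerivAt q ((Z2 t * Z t - Z1 t * Z1 t) / (Z t) ^ 2) t :=
    fun t => (hZ1d t).div (hZd t) (hZpos t).ne'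
  have hbound : ∀ t, (Z2 t * Z t - Z1 t * Z1 t) / (Z t) ^ 2 ≤ m ^ 2 := by
    intro t
    have hZ2le : Z2 t ≤ m ^ 2 * Z t := by
      rw [hZ2def, hZdef, Finset.mul_sum]
      apply Finset.sum_le_sum
      intro i _
      have : u i ^ 2 ≤ m ^ 2 := by
        have := hu i
        nlinarith [abs_nonneg (u i), sq_abs (u i)]
      nlinarith [Real.exp_pos (x i + t * u i), Real.exp_pos (-(x i + t * u i))]
    rw [div_le_iff₀ (by positivity)]
    nlinarith [hZpos t, sq_nonneg (Z1 t)]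
  have key := taylor_quad ψ q _ (m ^ 2) hψd hqd hbound
  have e1 : ψ 1 = lmax (x + u) := by
    simp [hψdef, hZdef, lmax]
  have e0 : ψ 0 = lmax x := by
    simp [hψdef, hZdef, lmax]
  have eq0 : q 0 = ∑ i, lmaxGrad x i * u i := by
    rw [hqdef]
    simp only [hZ1def, hZdef, zero_mul, add_zero]
    rw [Finset.sum_div]
    apply Finset.sum_congr rfl
    intro i _
    rw [lmaxGrad]
    ring
  rw [e1, e0, eq0] at key
  exact key

lemma abs_le_linf {ι : Type*} [Fintype ι] (y : ι → ℝ) (i : ι) : |y i| ≤ linf y := by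
  have := le_ciSup (f := fun j => |y j|) (Set.finite_range _).bddAbove i
  simpa [linf] using this

lemma linf_nonneg {ι : Type*} [Fintype ι] [Nonempty ι] (y : ι → ℝ) : 0 ≤ linf y :=
  le_trans (abs_nonneg _) (abs_le_linf y (Classical.arbitrary ι))

lemma linf_le {ι : Type*} [Fintype ι] [Nonempty ι] (y : ι → ℝ) (m : ℝ)
    (h : ∀ i, |y i| ≤ m) : linf y ≤ m := ciSup_le h

/-- Descent step lemma: for the potential
`φ(f) = lmax(C⁻¹ f) + lmax(2α R(b − B f))` with gradient `g(f)`, the step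
`h_e = −(δ/(1+4α²))·sgn(g(f)_e)·c_e` with `δ = ‖C g(f)‖₁` satisfies
`φ(f + h) ≤ φ(f) − δ²/(2 + 8α²)`. -/
theorem descent_step {V E W : Type*} [Fintype V] [Fintype E] [Fintype W]
    [Nonempty V] [Nonempty E]
    (B : Matrix V E ℝ) (c : E → ℝ) (hc : ∀ e, 0 < c e)
    (α : ℝ) (hα : 1 ≤ α) (R : Matrix W V ℝ)
    (hR : IsCongestionApprox B c α R)
    (b : V → ℝ) (hb : ∃ f : E → ℝ, B.mulVec f = b)
    (f : E → ℝ) :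
    let φ : (E → ℝ) → ℝ := fun f' =>
      lmax (fun e => f' e / c e) + lmax (fun w => 2 * α * R.mulVec (b - B.mulVec f') w)
    let g : E → ℝ := fun e =>
      lmaxGrad (fun e' => f e' / c e') e / c e
        - 2 * α * B.transpose.mulVec
            (R.transpose.mulVec
              (lmaxGrad (fun w => 2 * α * R.mulVec (b - B.mulVec f) w))) e
    let δ : ℝ := l1 (fun e => c e * g e)
    let h : E → ℝ := fun e => -(δ / (1 + 4 * α ^ 2)) * Real.sign (g e) * c e
    φ (f + h) ≤ φ f - δ ^ 2 / (2 + 8 * α ^ 2) := by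
  intro φ g δ h
  have hα0 : (0:ℝ) < α := lt_of_lt_of_le one_pos hα
  have hden : (0:ℝ) < 1 + 4 * α ^ 2 := by positivity
  have hδ0 : 0 ≤ δ := Finset.sum_nonneg fun e _ => abs_nonneg _
  set t : ℝ := δ / (1 + 4 * α ^ 2) with htdef
  have ht0 : 0 ≤ t := div_nonneg hδ0 hden.le
  set x1 : E → ℝ := fun e => f e / c e with hx1
  set x2 : W → ℝ := fun w => 2 * α * R.mulVec (b - B.mulVec f) w with hx2
  set s1 : E → ℝ := lmaxGrad x1 with hs1
  set s2 : W → ℝ := lmaxGrad x2 with hs2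
  set u1 : E → ℝ := fun e => h e / c e with hu1def
  set u2 : W → ℝ := fun w => -(2 * α) * (R.mulVec (B.mulVec h)) w with hu2def
  have hu1 : ∀ e, u1 e = -t * Real.sign (g e) := by
    intro e
    show h e / c e = _
    show -t * Real.sign (g e) * c e / c e = _
    rw [mul_div_assoc, div_self (hc e).ne']
    ring
  have hu1le : ∀ e, |u1 e| ≤ t := by
    intro e
    rw [hu1 e, abs_mul, abs_neg, abs_of_nonneg ht0]
    calc t * |Real.sign (g e)| ≤ t * 1 := by
          exact mul_le_mul_of_nonneg_left (abs_sign_le_one _) ht0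
      _ = t := mul_one t
  -- bound on u2 via congestion approximator
  have hu2le : ∀ w, |u2 w| ≤ 2 * α * t := by
    intro w
    have hopt_le : opt B c (B.mulVec h) ≤ linf u1 := by
      apply csInf_le
      · refine ⟨0, ?_⟩
        rintro r ⟨f', _, rfl⟩
        exact linf_nonneg _
      · exact ⟨h, rfl, rfl⟩
    have hlinf_le : linf (R.mulVec (B.mulVec h)) ≤ t :=
      le_trans (le_trans (hR (B.mulVec h) ⟨h, rfl⟩).1 hopt_le) (linf_le _ _ hu1le)
    calc |u2 w| = 2 * α * |(R.mulVec (B.mulVec h)) w| := by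
          rw [hu2def]; rw [abs_mul, abs_neg, abs_of_pos (by positivity : (0:ℝ) < 2*α)]
      _ ≤ 2 * α * linf (R.mulVec (B.mulVec h)) := by
          exact mul_le_mul_of_nonneg_left (abs_le_linf _ w) (by positivity)
      _ ≤ 2 * α * t := mul_le_mul_of_nonneg_left hlinf_le (by positivity)
  have ineq1 := lmax_add_le x1 u1 t hu1le
  have ineq2 := lmax_add_le x2 u2 (2 * α * t) hu2le
  -- identify arguments
  have A1 : (fun e => (f + h) e / c e) = x1 + u1 := by
    funext e
    simp only [Pi.add_apply, hx1, hu1def]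
    rw [add_div]
  have A2 : (fun w => 2 * α * R.mulVec (b - B.mulVec (f + h)) w) = x2 + u2 := by
    funext w
    have : b - B.mulVec (f + h) = (b - B.mulVec f) - B.mulVec h := by
      rw [Matrix.mulVec_add]; abel
    rw [this]
    simp only [Pi.add_apply, hx2, hu2def, Matrix.mulVec_sub, Pi.sub_apply]
    ring
  -- linear term
  have key : ∑ w, s2 w * (R.mulVec (B.mulVec h)) w
      = ∑ e, (B.transpose.mulVec (R.transpose.mulVec s2)) e * h e := by
    have h1 : ∑ w, s2 w * (R.mulVec (B.mulVec h)) w = s2 ⬝ᵥ (R *ᵥ (B *ᵥ h)) := rfl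
    rw [h1, dotProduct_mulVec, dotProduct_mulVec, ← Matrix.mulVec_transpose,
      ← Matrix.mulVec_transpose]
    rfl
  have Lsum : (∑ e, s1 e * u1 e) + (∑ w, s2 w * u2 w) = ∑ e, g e * h e := by
    have h2 : ∑ w, s2 w * u2 w
        = -(2 * α) * ∑ e, (B.transpose.mulVec (R.transpose.mulVec s2)) e * h e := by
      rw [← key, Finset.mul_sum]
      apply Finset.sum_congr rfl
      intro w _
      rw [hu2def]; ring
    rw [h2]
    rw [Finset.mul_sum, ← Finset.sum_add_distrib]
    apply Finset.sum_congr rfl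
    intro e _
    have hg : g e = s1 e / c e - 2 * α * (B.transpose.mulVec (R.transpose.mulVec s2)) e := rfl
    have hu : u1 e = h e / c e := rfl
    rw [hg, hu]
    field_simp
    ring
  -- value of linear term
  have hgh : ∑ e, g e * h e = -t * δ := by
    have hterm : ∀ e, g e * h e = -t * |c e * g e| := by
      intro e
      have hh : h e = -t * Real.sign (g e) * c e := rfl
      rw [hh, abs_mul, abs_of_pos (hc e), ← sign_mul_self_eq_abs (g e)]
      ring
    rw [Finset.sum_congr rfl (fun e _ => hterm e), ← Finset.mul_sum]
    rfl
  -- assemble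
  have hφ1 : φ (f + h) = lmax (x1 + u1) + lmax (x2 + u2) := by
    show lmax (fun e => (f + h) e / c e)
        + lmax (fun w => 2 * α * R.mulVec (b - B.mulVec (f + h)) w) = _
    rw [A1, A2]
  have hφ0 : φ f = lmax x1 + lmax x2 := rfl
  have harith : -t * δ + t ^ 2 / 2 + (2 * α * t) ^ 2 / 2 = -(δ ^ 2 / (2 + 8 * α ^ 2)) := by
    rw [htdef]
    have h2den : (0:ℝ) < 2 + 8 * α ^ 2 := by positivity
    field_simp
    ring
  rw [hφ1, hφ0]
  have total := add_le_add ineq1 ineq2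
  rw [hs1, hs2] at Lsum
  calc lmax (x1 + u1) + lmax (x2 + u2)
      ≤ (lmax x1 + ∑ e, lmaxGrad x1 e * u1 e + t ^ 2 / 2)
        + (lmax x2 + ∑ w, lmaxGrad x2 w * u2 w + (2 * α * t) ^ 2 / 2) := total
    _ = lmax x1 + lmax x2 + ((∑ e, lmaxGrad x1 e * u1 e) + ∑ w, lmaxGrad x2 w * u2 w)
        + (t ^ 2 / 2 + (2 * α * t) ^ 2 / 2) := by ring
    _ = lmax x1 + lmax x2 + (-t * δ) + (t ^ 2 / 2 + (2 * α * t) ^ 2 / 2) := by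
        rw [Lsum, hgh]
    _ = lmax x1 + lmax x2 - δ ^ 2 / (2 + 8 * α ^ 2) := by
        rw [show lmax x1 + lmax x2 + (-t * δ) + (t ^ 2 / 2 + (2 * α * t) ^ 2 / 2)
          = lmax x1 + lmax x2 + (-t * δ + t ^ 2 / 2 + (2 * α * t) ^ 2 / 2) by ring, harith]
        ring
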